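/- Let ξ_1,…,ξ_n (n ≥ 1) be pairwise distinct nonzero reals with ξ_i + ξ_j ≠ 0 for all i,j, such that m_k ≠ −ξ_i and m̄_k ≠ ξ_i for all i,k, and assume 1 + A·Ā is invertible. Then det(1 + A·(∏_{i=1}^n H_{ξ_i})·Ā·(∏_{i=1}^n H̄_{ξ_i}))·det[(1/(ξ_i+ξ_j))_{i,j=1..n}] = det(1 + A·Ā)·det[(E_{ξ_iξ_j}/(ξ_i+ξ_j))_{i,j=1..n}]. -/

import Mathlib

open Matrix Finset

noncomputable section

/-- `H_ζ = (M - ζ)(M + ζ)⁻¹` for `M = diag(m)`. -/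
def Hmat {N : ℕ} (m : Fin N → ℝ) (ζ : ℝ) : Matrix (Fin N) (Fin N) ℝ :=
  (Matrix.diagonal m - ζ • 1) * (Matrix.diagonal m + ζ • 1)⁻¹

/-- `H̄_ζ = (M̄ + ζ)(M̄ - ζ)⁻¹` for `M̄ = diag(m̄)`. -/
def Hbmat {N : ℕ} (mb : Fin N → ℝ) (ζ : ℝ) : Matrix (Fin N) (Fin N) ℝ :=
  (Matrix.diagonal mb + ζ • 1) * (Matrix.diagonal mb - ζ • 1)⁻¹

/-- The row `⟨b_ξ| = ⟨ā|(M̄ - ξ)⁻¹`. -/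
def rowB {N : ℕ} (mb ab : Fin N → ℝ) (ξ : ℝ) : Fin N → ℝ :=
  Matrix.vecMul ab (Matrix.diagonal mb - ξ • 1)⁻¹

/-- The column `|β̄_η⟩ = (M + η)⁻¹|ᾱ⟩`. -/
def colBb {N : ℕ} (m αb : Fin N → ℝ) (η : ℝ) : Fin N → ℝ :=
  Matrix.mulVec (Matrix.diagonal m + η • 1)⁻¹ αb

/-- The scalar `E_{ξη} = 1 + (ξ+η)·⟨b_ξ|·G·A·|β̄_η⟩` with `G = (1 + A·Ā)⁻¹`. -/
def Efun {N : ℕ} (m mb αb ab : Fin N → ℝ) (A Ab : Matrix (Fin N) (Fin N) ℝ)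
    (ξ η : ℝ) : ℝ :=
  1 + (ξ + η) *
    (rowB mb ab ξ ⬝ᵥ
      Matrix.mulVec (((1 : Matrix (Fin N) (Fin N) ℝ) + A * Ab)⁻¹ * A) (colBb m αb η))

/- ### Auxiliary scalar lemmas -/

private lemma stepA {n : ℕ} (ξ : Fin n → ℝ) (hdist : ∀ i j : Fin n, i ≠ j → ξ i ≠ ξ j) (x : ℝ) :
    ∑ i, (∏ j, (ξ i + ξ j)) / (∏ j ∈ univ.erase i, (ξ i - ξ j)) * ∏ j ∈ univ.erase i, (x - ξ j)
      = (∏ j, (x + ξ j)) - ∏ j, (x - ξ j) := by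
  classical
  have hinj : Set.InjOn ξ ↑(univ : Finset (Fin n)) := by
    intro i _ j _ h
    by_contra hne
    exact hdist i j hne h
  set p : Polynomial ℝ := (∏ j, (Polynomial.X + Polynomial.C (ξ j)))
      - ∏ j, (Polynomial.X - Polynomial.C (ξ j)) with hp
  have h1 : (∏ j, (Polynomial.X + Polynomial.C (ξ j)) : Polynomial ℝ).Monic :=
    Polynomial.monic_prod_of_monic _ _ fun j _ => Polynomial.monic_X_add_C _
  have h2 : (∏ j, (Polynomial.X - Polynomial.C (ξ j)) : Polynomial ℝ).Monic :=
    Polynomial.monic_prod_of_monic _ _ fun j _ => Polynomial.monic_X_sub_C _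
  have hd1 : (∏ j, (Polynomial.X + Polynomial.C (ξ j)) : Polynomial ℝ).degree = (n : ℕ) := by
    rw [Polynomial.degree_prod]; simp
  have hd2 : (∏ j, (Polynomial.X - Polynomial.C (ξ j)) : Polynomial ℝ).degree = (n : ℕ) := by
    rw [Polynomial.degree_prod]; simp
  have hdeg : p.degree < ((univ : Finset (Fin n)).card : ℕ) := by
    have := Polynomial.degree_sub_lt (hd1.trans hd2.symm) h1.ne_zero
      (h1.leadingCoeff.trans h2.leadingCoeff.symm)
    rw [hd1] at this
    simpa using this
  have hint := Lagrange.eq_interpolate hinj hdeg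
  have hev := congrArg (Polynomial.eval x) hint
  rw [Lagrange.interpolate_apply, Polynomial.eval_finset_sum] at hev
  calc ∑ i, (∏ j, (ξ i + ξ j)) / (∏ j ∈ univ.erase i, (ξ i - ξ j)) * ∏ j ∈ univ.erase i, (x - ξ j)
      = ∑ i, Polynomial.eval x (Polynomial.C (Polynomial.eval (ξ i) p)
          * Lagrange.basis univ ξ i) := by
        refine Finset.sum_congr rfl fun i _ => ?_
        rw [Polynomial.eval_mul, Polynomial.eval_C]
        have hevp : Polynomial.eval (ξ i) p = ∏ j, (ξ i + ξ j) := by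
          simp only [hp, Polynomial.eval_sub, Polynomial.eval_prod, Polynomial.eval_add,
            Polynomial.eval_X, Polynomial.eval_C]
          have h0 : (∏ j, (ξ i - ξ j)) = 0 :=
            Finset.prod_eq_zero (mem_univ i) (sub_self (ξ i))
          rw [h0]
          ring
        have hevb : Polynomial.eval x (Lagrange.basis univ ξ i)
            = (∏ j ∈ univ.erase i, (x - ξ j)) / (∏ j ∈ univ.erase i, (ξ i - ξ j)) := by
          rw [Lagrange.basis, Polynomial.eval_prod]
          rw [div_eq_mul_inv, ← Finset.prod_inv_distrib, ← Finset.prod_mul_distrib]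
          refine Finset.prod_congr rfl fun j _ => ?_
          rw [Lagrange.basisDivisor, Polynomial.eval_mul, Polynomial.eval_C,
            Polynomial.eval_sub, Polynomial.eval_X, Polynomial.eval_C]
          ring
        rw [hevp, hevb]
        ring
    _ = Polynomial.eval x p := hev.symm
    _ = (∏ j, (x + ξ j)) - ∏ j, (x - ξ j) := by
        simp only [hp, Polynomial.eval_sub, Polynomial.eval_prod, Polynomial.eval_add,
          Polynomial.eval_X, Polynomial.eval_C]

private lemma stepB {n : ℕ} (ξ : Fin n → ℝ) (hdist : ∀ i j : Fin n, i ≠ j → ξ i ≠ ξ j)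
    (x y : ℝ) :
    (x - y) * ∑ i, (∏ j, (ξ i + ξ j)) / (∏ j ∈ univ.erase i, (ξ i - ξ j))
        * (∏ j ∈ univ.erase i, (x - ξ j)) * (∏ j ∈ univ.erase i, (y - ξ j))
      = (∏ j, (x - ξ j)) * (∏ j, (y + ξ j)) - (∏ j, (x + ξ j)) * (∏ j, (y - ξ j)) := by
  rw [Finset.mul_sum]
  have step : ∀ i ∈ (univ : Finset (Fin n)),
      (x - y) * ((∏ j, (ξ i + ξ j)) / (∏ j ∈ univ.erase i, (ξ i - ξ j))
          * (∏ j ∈ univ.erase i, (x - ξ j)) * (∏ j ∈ univ.erase i, (y - ξ j)))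
      = (∏ j, (x - ξ j)) * ((∏ j, (ξ i + ξ j)) / (∏ j ∈ univ.erase i, (ξ i - ξ j))
            * (∏ j ∈ univ.erase i, (y - ξ j)))
        - (∏ j, (y - ξ j)) * ((∏ j, (ξ i + ξ j)) / (∏ j ∈ univ.erase i, (ξ i - ξ j))
            * (∏ j ∈ univ.erase i, (x - ξ j))) := by
    intro i _
    have hx : (∏ j, (x - ξ j)) = (x - ξ i) * ∏ j ∈ univ.erase i, (x - ξ j) :=
      (Finset.mul_prod_erase univ _ (mem_univ i)).symm
    have hy : (∏ j, (y - ξ j)) = (y - ξ i) * ∏ j ∈ univ.erase i, (y - ξ j) :=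
      (Finset.mul_prod_erase univ _ (mem_univ i)).symm
    rw [hx, hy]
    ring
  rw [Finset.sum_congr rfl step, Finset.sum_sub_distrib, ← Finset.mul_sum, ← Finset.mul_sum,
    stepA ξ hdist x, stepA ξ hdist y]
  ring

/-- `t_i(x)`, the partial-fraction coefficients. -/
private def tfun {n : ℕ} (ξ : Fin n → ℝ) (i : Fin n) (x : ℝ) : ℝ :=
  (∏ j, (ξ i + ξ j)) / (∏ j ∈ univ.erase i, (ξ i - ξ j))
    * (∏ j ∈ univ.erase i, (x - ξ j)) / (∏ j, (x + ξ j))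

private lemma key1 {n : ℕ} (ξ : Fin n → ℝ)
    (hdist : ∀ i j : Fin n, i ≠ j → ξ i ≠ ξ j) (hsum : ∀ i j, ξ i + ξ j ≠ 0)
    (x : ℝ) (hx : ∀ i, x + ξ i ≠ 0) (j : Fin n) :
    ∑ i, tfun ξ i x * (1 / (ξ i + ξ j)) = 1 / (x + ξ j) := by
  have hPp : (∏ l, (x + ξ l)) ≠ 0 := Finset.prod_ne_zero_iff.2 fun l _ => hx l
  have hM : (∏ l, (-ξ j - ξ l)) ≠ 0 := Finset.prod_ne_zero_iff.2 fun l _ => by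
    have := hsum j l; intro h; apply this; linarith
  have hs := stepB ξ hdist x (-ξ j)
  have hxj : x + ξ j ≠ 0 := hx j
  have hPp0 : (∏ l, (-ξ j + ξ l)) = 0 :=
    Finset.prod_eq_zero (mem_univ j) (by ring)
  calc ∑ i, tfun ξ i x * (1 / (ξ i + ξ j))
      = ∑ i, (-(1 / ((∏ l, (x + ξ l)) * (∏ l, (-ξ j - ξ l)))))
          * ((∏ l, (ξ i + ξ l)) / (∏ l ∈ univ.erase i, (ξ i - ξ l))
            * (∏ l ∈ univ.erase i, (x - ξ l)) * (∏ l ∈ univ.erase i, (-ξ j - ξ l))) := by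
        refine Finset.sum_congr rfl fun i _ => ?_
        have hMi : (∏ l, (-ξ j - ξ l)) = (-ξ j - ξ i) * ∏ l ∈ univ.erase i, (-ξ j - ξ l) :=
          (Finset.mul_prod_erase univ _ (mem_univ i)).symm
        have hYi : (∏ l ∈ univ.erase i, (-ξ j - ξ l)) ≠ 0 := by
          intro h; apply hM; rw [hMi, h, mul_zero]
        have hsij : ξ i + ξ j ≠ 0 := hsum i j
        have hdi : (∏ l ∈ univ.erase i, (ξ i - ξ l)) ≠ 0 :=
          Finset.prod_ne_zero_iff.2 fun l hl =>
            sub_ne_zero.2 (hdist i l (Ne.symm (mem_erase.1 hl).1))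
        have hsji : -ξ j - ξ i ≠ 0 := fun h => hsum i j (by linarith)
        rw [tfun, hMi]
        field_simp
        ring
    _ = (-(1 / ((∏ l, (x + ξ l)) * (∏ l, (-ξ j - ξ l)))))
          * ∑ i, ((∏ l, (ξ i + ξ l)) / (∏ l ∈ univ.erase i, (ξ i - ξ l))
            * (∏ l ∈ univ.erase i, (x - ξ l)) * (∏ l ∈ univ.erase i, (-ξ j - ξ l))) := by
        rw [Finset.mul_sum]
    _ = 1 / (x + ξ j) := by
        have hSeq : ∑ i, ((∏ l, (ξ i + ξ l)) / (∏ l ∈ univ.erase i, (ξ i - ξ l))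
            * (∏ l ∈ univ.erase i, (x - ξ l)) * (∏ l ∈ univ.erase i, (-ξ j - ξ l)))
            = ((∏ l, (x - ξ l)) * (∏ l, (-ξ j + ξ l))
              - (∏ l, (x + ξ l)) * (∏ l, (-ξ j - ξ l))) / (x - -ξ j) := by
          rw [eq_div_iff (by intro h; apply hxj; linarith), mul_comm]
          exact hs
        rw [hSeq, hPp0]
        field_simp
        rw [show x - -ξ j = x + ξ j by ring, mul_div_assoc, div_self hxj]
        ring

private lemma key2 {n : ℕ} (ξ : Fin n → ℝ)
    (hdist : ∀ i j : Fin n, i ≠ j → ξ i ≠ ξ j)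
    (x y : ℝ) (hx : ∀ i, x + ξ i ≠ 0) (hy : ∀ i, y - ξ i ≠ 0) (hxy : x ≠ y) :
    ((∏ j, (x - ξ j)) / (∏ j, (x + ξ j))) * ((∏ j, (y + ξ j)) / (∏ j, (y - ξ j)))
      = 1 + (x - y) * ∑ i, tfun ξ i x * (1 / (y - ξ i)) := by
  have hPp : (∏ l, (x + ξ l)) ≠ 0 := Finset.prod_ne_zero_iff.2 fun l _ => hx l
  have hPm : (∏ l, (y - ξ l)) ≠ 0 := Finset.prod_ne_zero_iff.2 fun l _ => hy l
  have hs := stepB ξ hdist x y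
  have hterm : ∀ i ∈ (univ : Finset (Fin n)), tfun ξ i x * (1 / (y - ξ i))
      = (1 / ((∏ l, (x + ξ l)) * (∏ l, (y - ξ l))))
        * ((∏ l, (ξ i + ξ l)) / (∏ l ∈ univ.erase i, (ξ i - ξ l))
            * (∏ l ∈ univ.erase i, (x - ξ l)) * (∏ l ∈ univ.erase i, (y - ξ l))) := by
    intro i _
    have hMi : (∏ l, (y - ξ l)) = (y - ξ i) * ∏ l ∈ univ.erase i, (y - ξ l) :=
      (Finset.mul_prod_erase univ _ (mem_univ i)).symm
    have hdi : (∏ l ∈ univ.erase i, (ξ i - ξ l)) ≠ 0 :=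
      Finset.prod_ne_zero_iff.2 fun l hl =>
        sub_ne_zero.2 (hdist i l (Ne.symm (mem_erase.1 hl).1))
    rw [tfun, hMi]
    have hyi := hy i
    have hYi : (∏ l ∈ univ.erase i, (y - ξ l)) ≠ 0 :=
      Finset.prod_ne_zero_iff.2 fun l _ => hy l
    field_simp
  rw [Finset.sum_congr rfl hterm, ← Finset.mul_sum]
  have hSeq : ∑ i, ((∏ l, (ξ i + ξ l)) / (∏ l ∈ univ.erase i, (ξ i - ξ l))
      * (∏ l ∈ univ.erase i, (x - ξ l)) * (∏ l ∈ univ.erase i, (y - ξ l)))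
      = ((∏ l, (x - ξ l)) * (∏ l, (y + ξ l))
        - (∏ l, (x + ξ l)) * (∏ l, (y - ξ l))) / (x - y) := by
    rw [eq_div_iff (sub_ne_zero.2 hxy), mul_comm]
    exact hs
  rw [hSeq]
  have hxy' : x - y ≠ 0 := sub_ne_zero.2 hxy
  field_simp
  ring

/- ### Auxiliary matrix lemmas -/

private lemma listprod_diag {N n : ℕ} (g : Fin n → Fin N → ℝ) :
    (List.ofFn fun i => Matrix.diagonal (g i)).prod
      = Matrix.diagonal (fun k => ∏ i, g i k) := by
  have h : (List.ofFn fun i => Matrix.diagonal (g i))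
      = (List.ofFn g).map (Matrix.diagonalRingHom (Fin N) ℝ) := by
    rw [List.map_ofFn]; rfl
  rw [h, ← map_list_prod]
  show Matrix.diagonal ((List.ofFn g).prod) = _
  have h2 : (List.ofFn g).prod = fun k => ∏ i, g i k := by
    funext k
    rw [Pi.list_prod_apply, List.map_ofFn]
    exact List.prod_ofFn
  rw [h2]

private lemma diag_inv {N : ℕ} (w : Fin N → ℝ) (h : ∀ k, w k ≠ 0) :
    (Matrix.diagonal w)⁻¹ = Matrix.diagonal (fun k => (w k)⁻¹) := by
  apply Matrix.inv_eq_right_inv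
  rw [diagonal_mul_diagonal]
  have h2 : (fun k => w k * (w k)⁻¹) = fun _ : Fin N => (1 : ℝ) := by
    funext k; exact mul_inv_cancel₀ (h k)
  rw [h2, diagonal_one]

private lemma diag_shift_inv {N : ℕ} (m : Fin N → ℝ) (ζ : ℝ) (h : ∀ k, m k + ζ ≠ 0) :
    (Matrix.diagonal m + ζ • (1 : Matrix (Fin N) (Fin N) ℝ))⁻¹
      = Matrix.diagonal (fun k => (m k + ζ)⁻¹) := by
  rw [smul_one_eq_diagonal, diagonal_add, diag_inv _ h]

private lemma diag_shift_inv' {N : ℕ} (m : Fin N → ℝ) (ζ : ℝ) (h : ∀ k, m k - ζ ≠ 0) :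
    (Matrix.diagonal m - ζ • (1 : Matrix (Fin N) (Fin N) ℝ))⁻¹
      = Matrix.diagonal (fun k => (m k - ζ)⁻¹) := by
  rw [smul_one_eq_diagonal, diagonal_sub, diag_inv _ h]

private lemma Hmat_diag {N : ℕ} (m : Fin N → ℝ) (ζ : ℝ) (h : ∀ k, m k + ζ ≠ 0) :
    Hmat m ζ = Matrix.diagonal (fun k => (m k - ζ) / (m k + ζ)) := by
  rw [Hmat, diag_shift_inv m ζ h, smul_one_eq_diagonal, diagonal_sub,
    diagonal_mul_diagonal]
  simp [div_eq_mul_inv]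

private lemma Hbmat_diag {N : ℕ} (mb : Fin N → ℝ) (ζ : ℝ) (h : ∀ k, mb k - ζ ≠ 0) :
    Hbmat mb ζ = Matrix.diagonal (fun k => (mb k + ζ) / (mb k - ζ)) := by
  rw [Hbmat, diag_shift_inv' mb ζ h, smul_one_eq_diagonal, diagonal_add,
    diagonal_mul_diagonal]
  simp [div_eq_mul_inv]


theorem n_shift_determinant_formula
    {N : ℕ} (hN : 1 ≤ N) (m mb : Fin N → ℝ)
    (αv αb av ab : Fin N → ℝ)
    (A Ab : Matrix (Fin N) (Fin N) ℝ)
    (hA : Matrix.diagonal mb * A - A * Matrix.diagonal m = Matrix.vecMulVec αv av)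
    (hAb : Matrix.diagonal m * Ab - Ab * Matrix.diagonal mb = Matrix.vecMulVec αb ab)
    (n : ℕ) (hn : 1 ≤ n) (ξ : Fin n → ℝ)
    (hdist : ∀ i j, i ≠ j → ξ i ≠ ξ j)
    (hnz : ∀ i, ξ i ≠ 0)
    (hsum : ∀ i j, ξ i + ξ j ≠ 0)
    (hm : ∀ i k, m k ≠ -ξ i) (hmb : ∀ i k, mb k ≠ ξ i)
    (hG : IsUnit ((1 : Matrix (Fin N) (Fin N) ℝ) + A * Ab)) :
    ((1 : Matrix (Fin N) (Fin N) ℝ) +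
          A * (List.ofFn fun i => Hmat m (ξ i)).prod *
            Ab * (List.ofFn fun i => Hbmat mb (ξ i)).prod).det *
        (Matrix.of fun i j : Fin n => 1 / (ξ i + ξ j)).det =
      ((1 : Matrix (Fin N) (Fin N) ℝ) + A * Ab).det *
        (Matrix.of fun i j : Fin n =>
          Efun m mb αb ab A Ab (ξ i) (ξ j) / (ξ i + ξ j)).det := by
  classical
  have hmξ : ∀ (i : Fin n) (k : Fin N), m k + ξ i ≠ 0 := fun i k h => hm i k (by linarith)
  have hmbξ : ∀ (i : Fin n) (k : Fin N), mb k - ξ i ≠ 0 := fun i k h => hmb i k (by linarith)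
  -- the diagonal entries of the shift products
  set dP : Fin N → ℝ := fun k => ∏ i, (m k - ξ i) / (m k + ξ i) with hdP
  set dPb : Fin N → ℝ := fun k => ∏ i, (mb k + ξ i) / (mb k - ξ i) with hdPb
  have hP : (List.ofFn fun i => Hmat m (ξ i)).prod = Matrix.diagonal dP := by
    have h1 : (List.ofFn fun i => Hmat m (ξ i))
        = List.ofFn fun i => Matrix.diagonal (fun k => (m k - ξ i) / (m k + ξ i)) :=
      congrArg List.ofFn (funext fun i => Hmat_diag m (ξ i) (fun k => hmξ i k))
    rw [h1, listprod_diag]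
  have hPb : (List.ofFn fun i => Hbmat mb (ξ i)).prod = Matrix.diagonal dPb := by
    have h1 : (List.ofFn fun i => Hbmat mb (ξ i))
        = List.ofFn fun i => Matrix.diagonal (fun k => (mb k + ξ i) / (mb k - ξ i)) :=
      congrArg List.ofFn (funext fun i => Hbmat_diag mb (ξ i) (fun k => hmbξ i k))
    rw [h1, listprod_diag]
  -- auxiliary matrices
  set G : Matrix (Fin N) (Fin N) ℝ := ((1 : Matrix (Fin N) (Fin N) ℝ) + A * Ab)⁻¹ with hGdef
  set Cm : Matrix (Fin n) (Fin n) ℝ := Matrix.of fun i j => 1 / (ξ i + ξ j) with hCm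
  set Bm : Matrix (Fin n) (Fin N) ℝ := Matrix.of fun i l => ab l * (mb l - ξ i)⁻¹ with hBm
  set Bb : Matrix (Fin N) (Fin n) ℝ := Matrix.of fun k j => (m k + ξ j)⁻¹ * αb k with hBb
  set Tb : Matrix (Fin N) (Fin n) ℝ := Matrix.of fun k i => αb k * tfun ξ i (m k) with hTb
  -- Identity (I) : Tb * Cm = Bb
  have hI : Tb * Cm = Bb := by
    ext k j
    rw [Matrix.mul_apply]
    simp only [hTb, hCm, hBb, Matrix.of_apply]
    calc ∑ i, αb k * tfun ξ i (m k) * (1 / (ξ i + ξ j))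
        = αb k * ∑ i, tfun ξ i (m k) * (1 / (ξ i + ξ j)) := by
          rw [Finset.mul_sum]; exact Finset.sum_congr rfl fun i _ => by ring
      _ = αb k * (1 / (m k + ξ j)) := by
          rw [key1 ξ hdist hsum (m k) (fun i => hmξ i k) j]
      _ = (m k + ξ j)⁻¹ * αb k := by rw [one_div]; ring
  -- Sylvester equation entrywise
  have hSyl : ∀ k l, (m k - mb l) * Ab k l = αb k * ab l := by
    intro k l
    have h := congrFun (congrFun hAb k) l
    simp only [Matrix.sub_apply, Matrix.diagonal_mul, Matrix.mul_diagonal,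
      Matrix.vecMulVec_apply] at h
    linarith [h]
  -- Identity (II) : diag dP * Ab * diag dPb = Ab + Tb * Bm
  have hII : Matrix.diagonal dP * Ab * Matrix.diagonal dPb = Ab + Tb * Bm := by
    ext k l
    rw [Matrix.add_apply, Matrix.mul_diagonal, Matrix.diagonal_mul, Matrix.mul_apply]
    have hsum_eq : ∑ i, Tb k i * Bm i l
        = (αb k * ab l) * ∑ i, tfun ξ i (m k) * (1 / (mb l - ξ i)) := by
      rw [Finset.mul_sum]
      refine Finset.sum_congr rfl fun i _ => ?_
      simp only [hTb, hBm, Matrix.of_apply]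
      rw [one_div]
      ring
    rw [hsum_eq]
    by_cases hcase : m k = mb l
    · have h0 : αb k * ab l = 0 := by
        have := hSyl k l
        rw [hcase] at this
        simpa using this.symm
      have h1 : dP k * dPb l = 1 := by
        rw [hdP, hdPb, ← Finset.prod_mul_distrib]
        refine Finset.prod_eq_one fun i _ => ?_
        rw [← hcase]
        have h2 := hmξ i k
        have h3 : m k - ξ i ≠ 0 := by rw [hcase]; exact hmbξ i l
        field_simp
      rw [h0]
      calc dP k * Ab k l * dPb l = (dP k * dPb l) * Ab k l := by ring
        _ = Ab k l + 0 * ∑ i, tfun ξ i (m k) * (1 / (mb l - ξ i)) := by rw [h1]; ring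
    · have hAbkl : αb k * ab l = (m k - mb l) * Ab k l := (hSyl k l).symm
      have hk2 := key2 ξ hdist (m k) (mb l) (fun i => hmξ i k) (fun i => hmbξ i l) hcase
      have hdd : dP k * dPb l
          = 1 + (m k - mb l) * ∑ i, tfun ξ i (m k) * (1 / (mb l - ξ i)) := by
        rw [hdP, hdPb]
        simp only []
        rw [Finset.prod_div_distrib, Finset.prod_div_distrib]
        exact hk2
      set S := ∑ i, tfun ξ i (m k) * (1 / (mb l - ξ i)) with hS
      linear_combination (Ab k l) * hdd - S * hAbkl
  -- invertibility facts
  have hGdet : ((1 : Matrix (Fin N) (Fin N) ℝ) + A * Ab).det ≠ 0 :=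
    (((Matrix.isUnit_iff_isUnit_det _).1 hG)).ne_zero
  have hGmul : G * ((1 : Matrix (Fin N) (Fin N) ℝ) + A * Ab) = 1 :=
    Matrix.nonsing_inv_mul _ ((Matrix.isUnit_iff_isUnit_det _).1 hG)
  have hdetG : G.det = (((1 : Matrix (Fin N) (Fin N) ℝ) + A * Ab).det)⁻¹ := by
    rw [hGdef, Matrix.det_nonsing_inv, Ring.inverse_eq_inv']
  -- rewrite of the E-matrix
  have hE : (Matrix.of fun i j : Fin n =>
        Efun m mb αb ab A Ab (ξ i) (ξ j) / (ξ i + ξ j)) = Cm + Bm * (G * A) * Bb := by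
    ext i j
    have hrow : rowB mb ab (ξ i) = fun l => ab l * (mb l - ξ i)⁻¹ := by
      rw [rowB, diag_shift_inv' mb (ξ i) (fun k => hmbξ i k)]
      funext l
      rw [Matrix.vecMul_diagonal]
    have hcol : colBb m αb (ξ j) = fun k => (m k + ξ j)⁻¹ * αb k := by
      rw [colBb, diag_shift_inv m (ξ j) (fun k => hmξ j k)]
      funext k
      rw [Matrix.mulVec_diagonal]
    have hdot : rowB mb ab (ξ i) ⬝ᵥ (G * A).mulVec (colBb m αb (ξ j))
        = (Bm * (G * A) * Bb) i j := by
      rw [hrow, hcol, Matrix.mul_assoc, Matrix.mul_apply]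
      simp only [dotProduct, Matrix.mulVec, Matrix.mul_apply, hBm, hBb, Matrix.of_apply,
        dotProduct, Finset.mul_sum, Finset.sum_mul]
      try rw [Finset.sum_comm]
      try refine Finset.sum_congr rfl fun l _ => Finset.sum_congr rfl fun c _ => by ring
    have e1 : Efun m mb αb ab A Ab (ξ i) (ξ j)
        = 1 + (ξ i + ξ j) * ((Bm * (G * A) * Bb) i j) := by
      rw [Efun, ← hGdef, hdot]
    rw [Matrix.add_apply, Matrix.of_apply, e1]
    have hsij : ξ i + ξ j ≠ 0 := hsum i j
    have hCij : Cm i j = 1 / (ξ i + ξ j) := rfl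
    rw [hCij]
    field_simp
  -- the determinant computation
  rw [hP, hPb, hE]
  have hL : (1 : Matrix (Fin N) (Fin N) ℝ) + A * Matrix.diagonal dP * Ab * Matrix.diagonal dPb
      = 1 + A * (Ab + Tb * Bm) := by
    rw [Matrix.mul_assoc A (Matrix.diagonal dP) Ab,
      Matrix.mul_assoc A (Matrix.diagonal dP * Ab) (Matrix.diagonal dPb), hII]
  rw [hL]
  have hR : Cm + Bm * (G * A) * Bb = ((1 : Matrix (Fin n) (Fin n) ℝ) + Bm * (G * A * Tb)) * Cm := by
    rw [← hI, Matrix.add_mul, Matrix.one_mul, ← Matrix.mul_assoc (Bm * (G * A)) Tb Cm,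
      Matrix.mul_assoc Bm (G * A) Tb]
  rw [hR, Matrix.det_mul, Matrix.det_one_add_mul_comm Bm (G * A * Tb)]
  have hfac : G * ((1 : Matrix (Fin N) (Fin N) ℝ) + A * (Ab + Tb * Bm))
      = (1 : Matrix (Fin N) (Fin N) ℝ) + G * A * Tb * Bm := by
    have h1 : (1 : Matrix (Fin N) (Fin N) ℝ) + A * (Ab + Tb * Bm)
        = ((1 : Matrix (Fin N) (Fin N) ℝ) + A * Ab) + A * (Tb * Bm) := by
      rw [Matrix.mul_add, add_assoc]
    rw [h1, Matrix.mul_add, hGmul, ← Matrix.mul_assoc G A (Tb * Bm),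
      ← Matrix.mul_assoc (G * A) Tb Bm]
  rw [← hfac, Matrix.det_mul, hdetG]
  field_simp
  try ring

end
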